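/- Let n, μ1 ∈ ℝ with n+μ1 > 1 and let δ ≥ 0 satisfy √δ ≤ n − d_*(n+μ1). Then for every p with 1 < p < p_S(n+μ1) one has q(p) := κ − (n+μ1−1)·p/2 + n + 1 > 0, where κ := (μ1−1−√δ)/2. -/
import Mathlib


/-- Strauss exponent `p_S(ν)` (as a real number; meaningful for `ν > 1`). -/
noncomputable def pS (ν : ℝ) : ℝ :=
  (ν + 1 + Real.sqrt (ν ^ 2 + 10 * ν - 7)) / (2 * (ν - 1))

/-- `d_*(ν)`: zero for `ν ≤ 1`, and `(−1−ν+√(ν²+10ν−7))/2` for `ν > 1`. -/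
noncomputable def dStar (ν : ℝ) : ℝ :=
  if 1 < ν then (-1 - ν + Real.sqrt (ν ^ 2 + 10 * ν - 7)) / 2 else 0

/-- If `√δ ≤ n − d_*(n+μ1)` then `q(p) > 0` for all `1 < p < p_S(n+μ1)`. -/
theorem q_pos_of_sqrt_delta_le (n μ1 δ : ℝ) (hnμ : 1 < n + μ1) (hδ : 0 ≤ δ)
    (h : Real.sqrt δ ≤ n - dStar (n + μ1)) :
    ∀ p : ℝ, 1 < p → p < pS (n + μ1) →
      0 < (μ1 - 1 - Real.sqrt δ) / 2 - (n + μ1 - 1) * p / 2 + n + 1 := by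
  intro p hp1 hp2
  have hd : dStar (n + μ1) =
      (-1 - (n + μ1) + Real.sqrt ((n + μ1) ^ 2 + 10 * (n + μ1) - 7)) / 2 := if_pos hnμ
  rw [hd] at h
  rw [pS, lt_div_iff₀ (by linarith : (0:ℝ) < 2 * (n + μ1 - 1))] at hp2
  nlinarith [hp2, h, Real.sqrt_nonneg δ, Real.sqrt_nonneg ((n + μ1) ^ 2 + 10 * (n + μ1) - 7)]
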